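/- Let ℓ be a prime, k a field of characteristic ℓ or 0, V a finite-dimensional k-vector space, and Π a group acting on V. Suppose A ⊆ V is a Π-submodule of dimension a such that the inclusion Λ^a A ↪ Λ^a V admits a Π-equivariant splitting s : Λ^a V → Λ^a A. Then the inclusion A ↪ V admits a Π-equivariant splitting, given by composing v ↦ (v ∧ −) ∈ Hom(Λ^{a−1}V, Λ^a V), restriction along Λ^{a−1}A ↪ Λ^{a−1}V, postcomposition with s, and the inverse of the isomorphism A ≅ Hom(Λ^{a−1}A, Λ^a A). -/

import Mathlib

section ExtPower

variable {R : Type*} [CommRing R] {M N : Type*} [AddCommGroup M] [Module R M]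
  [AddCommGroup N] [Module R N]

lemma epower_map_mem (f : M →ₗ[R] N) (n : ℕ) {x : ExteriorAlgebra R M}
    (hx : x ∈ ⋀[R]^n M) : ExteriorAlgebra.map f x ∈ ⋀[R]^n N := by
  rw [← ExteriorAlgebra.ιMulti_span_fixedDegree] at hx ⊢
  induction hx using Submodule.span_induction with
  | mem y hy =>
      obtain ⟨m, rfl⟩ := hy
      rw [ExteriorAlgebra.map_apply_ιMulti]
      exact Submodule.subset_span ⟨_, rfl⟩
  | zero => simp
  | add x y _ _ hx hy => rw [map_add]; exact add_mem hx hy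
  | smul c x _ hx => rw [map_smul]; exact Submodule.smul_mem _ _ hx

/-- The functorial map `Λ^n f : Λ^n M → Λ^n N` induced on `n`-th exterior powers by a
linear map `f : M → N`. -/
noncomputable def epMap (f : M →ₗ[R] N) (n : ℕ) : ⋀[R]^n M →ₗ[R] ⋀[R]^n N :=
  (ExteriorAlgebra.map f).toLinearMap.restrict fun _ hx => epower_map_mem f n hx

end ExtPower

open ExteriorAlgebra

section Aux
variable {k : Type*} [Field k] {M : Type*} [AddCommGroup M] [Module k M]

lemma aux_mul_mem {n : ℕ} (v : M) {x : ExteriorAlgebra k M} (hx : x ∈ ⋀[k]^n M) :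
    ι k v * x ∈ ⋀[k]^(n+1) M := by
  rw [exteriorPower] at hx ⊢
  rw [pow_succ']
  exact Submodule.mul_mem_mul (LinearMap.mem_range_self _ v) hx

noncomputable def wedgeL (n : ℕ) : M →ₗ[k] (⋀[k]^n M →ₗ[k] ⋀[k]^(n+1) M) where
  toFun v := (LinearMap.mulLeft k (ι k v)).restrict fun _ hx => aux_mul_mem v hx
  map_add' u v := LinearMap.ext fun m => Subtype.ext <| by
    simp [LinearMap.restrict_apply, add_mul]
    rfl
  map_smul' c v := LinearMap.ext fun m => Subtype.ext <| by
    simp [LinearMap.restrict_apply, smul_mul_assoc]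
    rfl

@[simp] lemma wedgeL_coe (n : ℕ) (v : M) (m : ⋀[k]^n M) :
    (wedgeL n v m : ExteriorAlgebra k M) = ι k v * ↑m := rfl

lemma aux_span_ιMulti {ι' : Type*} [Fintype ι'] (b : Module.Basis ι' k M) (m : ℕ) :
    ⋀[k]^m M ≤ Submodule.span k (Set.range fun c : Fin m → ι' => ιMulti k m (⇑b ∘ c)) := by
  classical
  rw [← ιMulti_span_fixedDegree, Submodule.span_le]
  rintro _ ⟨v, rfl⟩
  have hv : v = fun i => ∑ t, b.repr (v i) t • b t := funext fun i => (b.sum_repr (v i)).symm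
  rw [hv]
  have hms := (ιMulti k m (M := M)).toMultilinearMap.map_sum
    (g := fun i t => b.repr (v i) t • b t)
  rw [show ((ιMulti k m (M := M)) fun i => ∑ t, b.repr (v i) t • b t) =
      (ιMulti k m (M := M)).toMultilinearMap fun i => ∑ t, b.repr (v i) t • b t from rfl, hms]
  refine Submodule.sum_mem _ fun r _ => ?_
  rw [MultilinearMap.map_smul_univ]
  exact Submodule.smul_mem _ _ (Submodule.subset_span ⟨r, rfl⟩)

lemma aux_ιMulti_basis_ne_zero {N : ℕ} (b : Module.Basis (Fin N) k M) :
    ιMulti k N ⇑b ≠ 0 := by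
  classical
  intro h
  have hla := liftAlternating_apply_ιMulti (R := k) (N := k)
    (Function.update (fun i => (0 : M [⋀^Fin i]→ₗ[k] k)) N b.det) ⇑b
  rw [h, map_zero] at hla
  rw [Function.update_self N b.det (fun i => (0 : M [⋀^Fin i]→ₗ[k] k))] at hla
  exact zero_ne_one (hla.trans b.det_self)

lemma aux_top_span {N : ℕ} (b : Module.Basis (Fin N) k M) :
    ⋀[k]^N M ≤ k ∙ ιMulti k N ⇑b := by
  classical
  refine (aux_span_ιMulti b N).trans (Submodule.span_le.2 ?_)
  rintro _ ⟨c, rfl⟩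
  simp only
  by_cases hc : Function.Injective c
  · set σ : Equiv.Perm (Fin N) := Equiv.ofBijective c (Finite.injective_iff_bijective.1 hc)
    have hbc : ⇑b ∘ c = ⇑b ∘ ⇑σ := rfl
    rw [hbc, (ιMulti k N (M := M)).map_perm ⇑b σ, Units.smul_def,
      ← Int.cast_smul_eq_zsmul k]
    exact Submodule.smul_mem _ _ (Submodule.mem_span_singleton_self _)
  · obtain ⟨p, q, hpq, hne⟩ := Function.not_injective_iff.1 hc
    rw [(ιMulti k N (M := M)).map_eq_zero_of_eq (⇑b ∘ c)
      (show b (c p) = b (c q) by rw [hpq]) hne]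
    exact Submodule.zero_mem _

lemma aux_pred_span {N : ℕ} (b : Module.Basis (Fin (N+1)) k M) :
    ⋀[k]^N M ≤ Submodule.span k
      (Set.range fun i : Fin (N+1) => ιMulti k N (⇑b ∘ i.succAbove)) := by
  classical
  refine (aux_span_ιMulti b N).trans (Submodule.span_le.2 ?_)
  rintro _ ⟨c, rfl⟩
  simp only
  by_cases hc : Function.Injective c
  · have hns : ¬ Function.Surjective c := fun hs => by
      have := Fintype.card_le_of_surjective c hs
      simp at this
    simp only [Function.Surjective, not_forall] at hns
    obtain ⟨i, hi⟩ := hns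
    choose τ hτ using fun x : Fin N =>
      Fin.exists_succAbove_eq (show c x ≠ i from fun h => hi ⟨x, h⟩)
    have hτinj : Function.Injective τ := fun x y hxy => hc (by rw [← hτ x, ← hτ y, hxy])
    set σ : Equiv.Perm (Fin N) := Equiv.ofBijective τ (Finite.injective_iff_bijective.1 hτinj)
    have hbc : ⇑b ∘ c = (⇑b ∘ i.succAbove) ∘ ⇑σ := funext fun x => by
      simp only [Function.comp_apply]
      rw [show σ x = τ x from rfl, hτ x]
    rw [hbc, (ιMulti k N (M := M)).map_perm (⇑b ∘ i.succAbove) σ, Units.smul_def,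
      ← Int.cast_smul_eq_zsmul k]
    exact Submodule.smul_mem _ _ (Submodule.subset_span ⟨i, rfl⟩)
  · obtain ⟨p, q, hpq, hne⟩ := Function.not_injective_iff.1 hc
    rw [(ιMulti k N (M := M)).map_eq_zero_of_eq (⇑b ∘ c)
      (show b (c p) = b (c q) by rw [hpq]) hne]
    exact Submodule.zero_mem _

lemma aux_wedge_same {N : ℕ} (b : Module.Basis (Fin (N+1)) k M) (i : Fin (N+1)) :
    ∃ ε : k, ε * ε = 1 ∧
      ι k (b i) * ιMulti k N (⇑b ∘ i.succAbove) = ε • ιMulti k (N+1) ⇑b := by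
  classical
  set π : Equiv.Perm (Fin (N+1)) := (finSuccEquiv' 0).trans (finSuccEquiv' i).symm with hπdef
  have hπ : ⇑b ∘ ⇑π = Matrix.vecCons (b i) (⇑b ∘ i.succAbove) := by
    funext x
    refine Fin.cases ?_ (fun j => ?_) x
    · simp [hπdef, finSuccEquiv'_at, finSuccEquiv'_symm_none]
    · simp only [Function.comp_apply, Matrix.cons_val_succ, hπdef, Equiv.trans_apply]
      rw [show (j.succ : Fin (N+1)) = (0 : Fin (N+1)).succAbove j from (Fin.zero_succAbove j).symm,
        finSuccEquiv'_succAbove, finSuccEquiv'_symm_some]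
  refine ⟨((Equiv.Perm.sign π : ℤ) : k), ?_, ?_⟩
  · rw [← Int.cast_mul, ← Units.val_mul, Int.units_mul_self]
    simp
  · have h1 : ι k (b i) * ιMulti k N (⇑b ∘ i.succAbove) =
        ιMulti k (N+1) (Matrix.vecCons (b i) (⇑b ∘ i.succAbove)) := by
      rw [ιMulti_succ_apply, Matrix.cons_val_zero, Matrix.tail_cons]
    rw [h1, ← hπ, (ιMulti k (N+1) (M := M)).map_perm ⇑b π, Units.smul_def,
      ← Int.cast_smul_eq_zsmul k]

lemma aux_wedge_ne {N : ℕ} (b : Module.Basis (Fin (N+1)) k M) {i j : Fin (N+1)} (h : j ≠ i) :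
    ι k (b j) * ιMulti k N (⇑b ∘ i.succAbove) = 0 := by
  obtain ⟨l, hl⟩ := Fin.exists_succAbove_eq h
  have h1 : ι k (b j) * ιMulti k N (⇑b ∘ i.succAbove) =
      ιMulti k (N+1) (Matrix.vecCons (b j) (⇑b ∘ i.succAbove)) := by
    rw [ιMulti_succ_apply, Matrix.cons_val_zero, Matrix.tail_cons]
  rw [h1]
  exact (ιMulti k (N+1) (M := M)).map_eq_zero_of_eq _
    (show _ = _ by
      rw [Matrix.cons_val_succ, Matrix.cons_val_zero, Function.comp_apply, hl])
    (Fin.succ_ne_zero l)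


@[simp] lemma epMap_coe {R : Type*} [CommRing R] {M N : Type*} [AddCommGroup M] [Module R M]
    [AddCommGroup N] [Module R N] (f : M →ₗ[R] N) (n : ℕ) (x : ⋀[R]^n M) :
    (epMap f n x : ExteriorAlgebra R N) = ExteriorAlgebra.map f ↑x := rfl

variable {V : Type*} [AddCommGroup V] [Module k V]

/-- The map `v ↦ s ∘ (v ∧ -) ∘ Λ^n(incl)`. -/
noncomputable def alphaMap (A : Submodule k V) (n : ℕ)
    (s : ⋀[k]^(n+1) V →ₗ[k] ⋀[k]^(n+1) (↥A)) :
    V →ₗ[k] ((⋀[k]^n (↥A)) →ₗ[k] ⋀[k]^(n+1) (↥A)) where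
  toFun v := s ∘ₗ wedgeL n v ∘ₗ epMap A.subtype n
  map_add' u v := LinearMap.ext fun m => by
    simp [LinearMap.comp_apply, map_add, LinearMap.add_apply]
  map_smul' c v := LinearMap.ext fun m => by
    simp [LinearMap.comp_apply, map_smul, LinearMap.smul_apply]

@[simp] lemma alphaMap_apply (A : Submodule k V) (n : ℕ)
    (s : ⋀[k]^(n+1) V →ₗ[k] ⋀[k]^(n+1) (↥A)) (v : V) (m : ⋀[k]^n (↥A)) :
    alphaMap A n s v m = s (wedgeL n v (epMap A.subtype n m)) := rfl

end Aux


set_option maxHeartbeats 1600000 in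
/-- Let `ℓ` be a prime, `k` a field of characteristic `ℓ` or `0`, `V` a
finite-dimensional `k`-vector space with an action `ρ` of a group `Π` (here `G`), and
`A ⊆ V` a `Π`-stable subspace of dimension `a`.  If the inclusion `Λ^a A ↪ Λ^a V` admits a
`Π`-equivariant splitting `s : Λ^a V → Λ^a A`, then the inclusion `A ↪ V` admits a
`Π`-equivariant splitting `V → A`. -/
theorem stmt_7 (ℓ : ℕ) [Fact ℓ.Prime] (k : Type) [Field k]
    (hchar : CharP k ℓ ∨ CharP k 0)
    (V : Type) [AddCommGroup V] [Module k V] [FiniteDimensional k V]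
    (G : Type) [Group G] (ρ : Representation k G V)
    (A : Submodule k V) (a : ℕ) (ha : Module.finrank k A = a)
    (hstab : ∀ g : G, ∀ x ∈ A, ρ g x ∈ A)
    (s : ⋀[k]^a V →ₗ[k] ⋀[k]^a (↥A))
    (hsplit : ∀ x : ⋀[k]^a (↥A), s (epMap (A.subtype) a x) = x)
    (hequiv : ∀ (g : G) (x : ⋀[k]^a V),
      s (epMap (ρ g) a x) = epMap ((ρ g).restrict (hstab g)) a (s x)) :
    ∃ p : V →ₗ[k] A,
      (∀ y : A, p (y : V) = y) ∧
      (∀ (g : G) (v : V), p (ρ g v) = (ρ g).restrict (hstab g) (p v)) := by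
  classical
  obtain rfl | ⟨n, rfl⟩ : a = 0 ∨ ∃ n, a = n + 1 := by
    cases a with
    | zero => exact Or.inl rfl
    | succ n => exact Or.inr ⟨n, rfl⟩
  · -- degenerate case `a = 0`: the submodule is trivial
    have hA : A = ⊥ := Submodule.finrank_eq_zero.mp ha
    refine ⟨0, fun y => ?_, fun g v => by simp⟩
    have hy : (y : V) ∈ (⊥ : Submodule k V) := hA ▸ y.2
    rw [Submodule.mem_bot] at hy
    have hy0 : y = 0 := Subtype.ext (by simpa using hy)
    simp [hy0]
  · -- main case `a = n + 1`
    have hρ : ∀ (g : G) (v : V), ρ g (ρ g⁻¹ v) = v := by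
      intro g v
      have h1 : ρ g * ρ g⁻¹ = 1 := by rw [← map_mul, mul_inv_cancel, map_one]
      calc ρ g (ρ g⁻¹ v) = (ρ g * ρ g⁻¹) v := rfl
        _ = v := by rw [h1]; rfl
    set rg : G → (↥A →ₗ[k] ↥A) := fun g => (ρ g).restrict (hstab g) with hrgdef
    have hrg_coe : ∀ (g : G) (x : ↥A), ((rg g x : ↥A) : V) = ρ g ↑x := fun g x => rfl
    have hrg_inv : ∀ (g : G) (x : ↥A), rg g (rg g⁻¹ x) = x := by
      intro g x
      apply Subtype.ext
      rw [hrg_coe, hrg_coe, hρ]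
    let bA : Module.Basis (Fin (n+1)) k ↥A := Module.finBasisOfFinrankEq k ↥A ha
    choose ε hε1 hε2 using fun i => aux_wedge_same bA i
    set ψ : ↥A →ₗ[k] ((⋀[k]^n (↥A)) →ₗ[k] ⋀[k]^(n+1) (↥A)) := wedgeL n with hψdef
    set α := alphaMap A n s with hαdef
    -- `α` restricted to `A` is `ψ`
    have key1 : ∀ x : ↥A, α ↑x = ψ x := by
      intro x
      refine LinearMap.ext fun m => ?_
      have hval : wedgeL n ((x : ↥A) : V) (epMap A.subtype n m) =
          epMap A.subtype (n+1) (wedgeL n x m) := by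
        apply Subtype.ext
        simp only [epMap_coe, wedgeL_coe, map_mul, map_apply_ι, Submodule.subtype_apply]
      rw [hαdef, alphaMap_apply, hval, hsplit]
    -- equivariance of `α`
    have key2 : ∀ (g : G) (v : V) (m : ⋀[k]^n (↥A)),
        α (ρ g v) m = epMap (rg g) (n+1) (α v (epMap (rg g⁻¹) n m)) := by
      intro g v m
      have h0 := hequiv g (wedgeL n v (epMap A.subtype n (epMap (rg g⁻¹) n m)))
      rw [hαdef, alphaMap_apply, alphaMap_apply, ← h0]
      congr 1
      apply Subtype.ext
      have hcomp : (ρ g) ∘ₗ (A.subtype ∘ₗ rg g⁻¹) = A.subtype := by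
        refine LinearMap.ext fun x => ?_
        simp only [LinearMap.comp_apply, Submodule.subtype_apply]
        rw [hrg_coe, hρ]
      have hmap3 : ∀ y : ExteriorAlgebra k ↥A,
          ExteriorAlgebra.map (ρ g) (ExteriorAlgebra.map A.subtype
            (ExteriorAlgebra.map (rg g⁻¹) y)) = ExteriorAlgebra.map A.subtype y := by
        intro y
        have e1 := DFunLike.congr_fun (ExteriorAlgebra.map_comp_map (rg g⁻¹) A.subtype) y
        have e2 := DFunLike.congr_fun
          (ExteriorAlgebra.map_comp_map (A.subtype ∘ₗ rg g⁻¹) (ρ g)) y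
        simp only [AlgHom.comp_apply] at e1 e2
        rw [e1, e2, hcomp]
      simp only [epMap_coe, wedgeL_coe, map_mul, map_apply_ι, hmap3]
    -- equivariance of `ψ`
    have key3 : ∀ (g : G) (x : ↥A) (m : ⋀[k]^n (↥A)),
        ψ (rg g x) m = epMap (rg g) (n+1) (ψ x (epMap (rg g⁻¹) n m)) := by
      intro g x m
      apply Subtype.ext
      have hcomp : (rg g) ∘ₗ (rg g⁻¹) = LinearMap.id := LinearMap.ext fun x => hrg_inv g x
      have hmap2 : ∀ y : ExteriorAlgebra k ↥A,
          ExteriorAlgebra.map (rg g) (ExteriorAlgebra.map (rg g⁻¹) y) = y := by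
        intro y
        have e1 := DFunLike.congr_fun (ExteriorAlgebra.map_comp_map (rg g⁻¹) (rg g)) y
        simp only [AlgHom.comp_apply] at e1
        rw [e1, hcomp, ExteriorAlgebra.map_id]
        rfl
      simp only [hψdef, epMap_coe, wedgeL_coe, map_mul, map_apply_ι, hmap2]
    -- the distinguished generators
    let ω : ⋀[k]^(n+1) (↥A) :=
      ⟨ιMulti k (n+1) ⇑bA, ιMulti_range k (n+1) (Set.mem_range_self _)⟩
    let Ω : Fin (n+1) → ⋀[k]^n (↥A) :=
      fun i => ⟨ιMulti k n (⇑bA ∘ i.succAbove), ιMulti_range k n (Set.mem_range_self _)⟩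
    have hΩcoe : ∀ j, ((Ω j : ⋀[k]^n (↥A)) : ExteriorAlgebra k ↥A) =
        ιMulti k n (⇑bA ∘ j.succAbove) := fun j => rfl
    have hωcoe : ((ω : ⋀[k]^(n+1) (↥A)) : ExteriorAlgebra k ↥A) = ιMulti k (n+1) ⇑bA := rfl
    have hψΩ : ∀ (x : ↥A) (j : Fin (n+1)),
        (ψ x (Ω j) : ExteriorAlgebra k ↥A) =
          (bA.repr x j * ε j) • (ω : ExteriorAlgebra k ↥A) := by
      intro x j
      have H : (LinearMap.mulRight k (ιMulti k n (⇑bA ∘ j.succAbove))).comp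
            (ι k : ↥A →ₗ[k] ExteriorAlgebra k ↥A) =
          (bA.coord j).smulRight (ε j • (ιMulti k (n+1) ⇑bA)) := by
        refine bA.ext fun i => ?_
        simp only [LinearMap.comp_apply, LinearMap.mulRight_apply, LinearMap.smulRight_apply,
          Module.Basis.coord_apply, Module.Basis.repr_self]
        rw [Finsupp.single_apply]
        by_cases hij : i = j
        · subst hij
          rw [if_pos rfl, one_smul]
          exact hε2 i
        · rw [if_neg hij, zero_smul]
          exact aux_wedge_ne bA hij
      have hx := LinearMap.congr_fun H x
      simp only [LinearMap.comp_apply, LinearMap.mulRight_apply, LinearMap.smulRight_apply,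
        Module.Basis.coord_apply] at hx
      rw [hψdef, wedgeL_coe, hΩcoe, hωcoe, hx, smul_smul]
    have hεne : ∀ j, ε j ≠ 0 := by
      intro j hj
      have := hε1 j
      rw [hj, zero_mul] at this
      exact zero_ne_one this
    have hψinj : Function.Injective ψ := by
      refine (injective_iff_map_eq_zero ψ).mpr fun x hx => ?_
      have hrepr : ∀ j, bA.repr x j = 0 := by
        intro j
        have h0 : (ψ x (Ω j) : ExteriorAlgebra k ↥A) = 0 := by rw [hx]; rfl
        rw [hψΩ x j] at h0
        rcases smul_eq_zero.mp h0 with h | h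
        · rcases mul_eq_zero.mp h with h' | h'
          · exact h'
          · exact absurd h' (hεne j)
        · exact absurd h (aux_ιMulti_basis_ne_zero bA)
      refine bA.ext_elem fun i => ?_
      rw [hrepr i, map_zero]
      rfl
    have hspanΩ : Submodule.span k (Set.range Ω) = ⊤ := by
      rw [eq_top_iff]
      intro m _
      have hm : (m : ExteriorAlgebra k ↥A) ∈ Submodule.span k
          (Set.range fun i : Fin (n+1) => ιMulti k n (⇑bA ∘ i.succAbove)) :=
        aux_pred_span bA m.2
      have hmap : Submodule.map (⋀[k]^n (↥A)).subtype (Submodule.span k (Set.range Ω)) =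
          Submodule.span k (Set.range fun i : Fin (n+1) => ιMulti k n (⇑bA ∘ i.succAbove)) := by
        rw [Submodule.map_span]
        congr 1
        rw [← Set.range_comp]
        rfl
      rw [← hmap] at hm
      obtain ⟨y, hy, hyx⟩ := hm
      have hym : y = m := Subtype.ext hyx
      exact hym ▸ hy
    have hψsurj : Function.Surjective ψ := by
      intro f
      have hmem : ∀ i, ((f (Ω i) : ⋀[k]^(n+1) (↥A)) : ExteriorAlgebra k ↥A) ∈
          (k ∙ ιMulti k (n+1) ⇑bA) := fun i => aux_top_span bA (f (Ω i)).2
      choose c hc using fun i => Submodule.mem_span_singleton.mp (hmem i)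
      refine ⟨∑ i, (ε i * c i) • bA i, ?_⟩
      apply LinearMap.ext_on hspanΩ
      rintro _ ⟨j, rfl⟩
      apply Subtype.ext
      rw [hψΩ _ j]
      have hr : bA.repr (∑ i, (ε i * c i) • bA i) j = ε j * c j := by
        rw [bA.repr_sum_self]
      rw [hr, show ε j * c j * ε j = c j by
        rw [mul_comm (ε j) (c j), mul_assoc, hε1 j, mul_one]]
      rw [show ((ω : ⋀[k]^(n+1) (↥A)) : ExteriorAlgebra k ↥A) = ιMulti k (n+1) ⇑bA from rfl]
      exact hc j
    let ψe : ↥A ≃ₗ[k] ((⋀[k]^n (↥A)) →ₗ[k] ⋀[k]^(n+1) (↥A)) :=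
      LinearEquiv.ofBijective ψ ⟨hψinj, hψsurj⟩
    refine ⟨ψe.symm.toLinearMap ∘ₗ α, ?_, ?_⟩
    · intro y
      show ψe.symm (α ↑y) = y
      rw [key1 y]
      exact ψe.symm_apply_apply y
    · intro g v
      apply hψinj
      have h1 : ψ (ψe.symm (α (ρ g v))) = α (ρ g v) := ψe.apply_symm_apply _
      have h2 : ψ (ψe.symm (α v)) = α v := ψe.apply_symm_apply _
      show ψ (ψe.symm (α (ρ g v))) = ψ (rg g (ψe.symm (α v)))
      rw [h1]
      refine LinearMap.ext fun m => ?_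
      rw [key2 g v m, key3 g (ψe.symm (α v)) m, h2]
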